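/- The Moser spindle is a unit-distance graph in the plane: there exist 7 distinct points in ℝ² such that the 11 specified adjacent pairs are each at Euclidean distance exactly 1. -/
import Mathlib


/-- A point in the Euclidean plane with given coordinates. -/
noncomputable def pt (x y : ℝ) : EuclideanSpace ℝ (Fin 2) :=
  (WithLp.equiv 2 (Fin 2 → ℝ)).symm ![x, y]

lemma dist_pt (x y x' y' : ℝ) :
    dist (pt x y) (pt x' y') = Real.sqrt ((x - x')^2 + (y - y')^2) := by
  simp [pt, EuclideanSpace.dist_eq, Fin.sum_univ_two, Real.dist_eq, sq_abs]

lemma dist_pt_one (x y x' y' : ℝ) (h : (x - x')^2 + (y - y')^2 = 1) :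
    dist (pt x y) (pt x' y') = 1 := by
  rw [dist_pt, h, Real.sqrt_one]

lemma pt_ne_of_snd (x y x' y' : ℝ) (h : y ≠ y') : pt x y ≠ pt x' y' := by
  intro heq
  apply h
  have h1 : pt x y 1 = pt x' y' 1 := by rw [heq]
  simpa [pt] using h1

lemma pt_ne_of_fst (x y x' y' : ℝ) (h : x ≠ x') : pt x y ≠ pt x' y' := by
  intro heq
  apply h
  have h1 : pt x y 0 = pt x' y' 0 := by rw [heq]
  simpa [pt] using h1

/-- The Moser spindle is a unit-distance graph in the plane: there exist 7 distinct
points in ℝ² such that the 11 specified adjacent pairs (A–B, A–C, B–X, C–X, A–D,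
A–E, D–Y, E–Y, B–C, D–E, X–Y) are each at Euclidean distance exactly 1. -/
theorem moser_spindle_is_unit_distance_graph :
    ∃ A B C D E X Y : EuclideanSpace ℝ (Fin 2),
      [A, B, C, D, E, X, Y].Pairwise (· ≠ ·) ∧
      dist A B = 1 ∧ dist A C = 1 ∧ dist B X = 1 ∧ dist C X = 1 ∧
      dist A D = 1 ∧ dist A E = 1 ∧ dist D Y = 1 ∧ dist E Y = 1 ∧
      dist B C = 1 ∧ dist D E = 1 ∧ dist X Y = 1 := by
  set a : ℝ := Real.sqrt 3 with ha_def
  set b : ℝ := Real.sqrt 11 with hb_def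
  have ha2 : a ^ 2 = 3 := Real.sq_sqrt (by norm_num)
  have hb2 : b ^ 2 = 11 := Real.sq_sqrt (by norm_num)
  have ha0 : 0 < a := Real.sqrt_pos.mpr (by norm_num)
  have hb0 : 0 < b := Real.sqrt_pos.mpr (by norm_num)
  refine ⟨pt 0 0, pt (-1/2) (a/2), pt (1/2) (a/2),
    pt ((-5 - a*b)/12) ((5*a - b)/12), pt ((5 - a*b)/12) ((5*a + b)/12),
    pt 0 a, pt (-(a*b)/6) (5*a/6), ?_, ?_, ?_, ?_, ?_, ?_, ?_, ?_, ?_, ?_, ?_, ?_⟩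
  · simp only [List.pairwise_cons, List.mem_cons, List.not_mem_nil,
      forall_eq_or_imp, forall_eq, or_false, false_implies, implies_true,
      and_true, List.Pairwise.nil]
    refine ⟨⟨?_, ?_, ?_, ?_, ?_, ?_⟩, ⟨?_, ?_, ?_, ?_, ?_⟩, ⟨?_, ?_, ?_, ?_⟩,
      ⟨?_, ?_, ?_⟩, ⟨?_, ?_⟩, ?_⟩
    · apply pt_ne_of_snd; intro h; nlinarith
    · apply pt_ne_of_snd; intro h; nlinarith
    · apply pt_ne_of_snd; intro h; nlinarith
    · apply pt_ne_of_snd; intro h; nlinarith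
    · apply pt_ne_of_snd; intro h; nlinarith
    · apply pt_ne_of_snd; intro h; nlinarith
    · apply pt_ne_of_fst; norm_num
    · apply pt_ne_of_snd; intro h; nlinarith
    · apply pt_ne_of_snd; intro h; nlinarith
    · apply pt_ne_of_snd; intro h; nlinarith
    · apply pt_ne_of_snd; intro h; nlinarith
    · apply pt_ne_of_snd; intro h; nlinarith
    · apply pt_ne_of_snd; intro h; nlinarith
    · apply pt_ne_of_snd; intro h; nlinarith
    · apply pt_ne_of_snd; intro h; nlinarith
    · apply pt_ne_of_snd; intro h; nlinarith
    · apply pt_ne_of_snd; intro h; nlinarith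
    · apply pt_ne_of_snd; intro h; nlinarith
    · apply pt_ne_of_snd; intro h; nlinarith
    · apply pt_ne_of_snd; intro h; nlinarith
    · apply pt_ne_of_snd; intro h; nlinarith
  · exact dist_pt_one _ _ _ _ (by nlinarith)
  · exact dist_pt_one _ _ _ _ (by nlinarith)
  · exact dist_pt_one _ _ _ _ (by nlinarith)
  · exact dist_pt_one _ _ _ _ (by nlinarith)
  · exact dist_pt_one _ _ _ _ (by nlinarith)
  · exact dist_pt_one _ _ _ _ (by nlinarith)
  · exact dist_pt_one _ _ _ _ (by nlinarith)
  · exact dist_pt_one _ _ _ _ (by nlinarith)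
  · exact dist_pt_one _ _ _ _ (by nlinarith)
  · exact dist_pt_one _ _ _ _ (by nlinarith)
  · exact dist_pt_one _ _ _ _ (by nlinarith)
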